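/- Let H be a real Hilbert space, U ⊆ V closed subspaces of H with orthogonal projections P_U and P_V, u ∈ H, w ∈ V, and δ ≥ 0. If ‖P_V u − w‖ ≤ δ · ‖u − P_V u‖, then ‖u − P_U u‖² ≤ (1 + 2δ²) · ‖u − P_V u‖² + 2 · ‖w − P_U w‖². -/

import Mathlib

open scoped RealInnerProductSpace

/-- if `U ⊆ V` are closed subspaces of a Hilbert space with orthogonal
projections `P_U`, `P_V`, `w ∈ V` and `‖P_V u − w‖ ≤ δ ‖u − P_V u‖`, then
`‖u − P_U u‖² ≤ (1 + 2δ²) ‖u − P_V u‖² + 2 ‖w − P_U w‖²`. -/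
theorem stmt_17 {H : Type*} [NormedAddCommGroup H] [InnerProductSpace ℝ H] [CompleteSpace H]
    (U V : Submodule ℝ H) [CompleteSpace U] [CompleteSpace V] (hUV : U ≤ V)
    (u w : H) (hw : w ∈ V) (δ : ℝ) (hδ : 0 ≤ δ)
    (hbound : ‖(V.orthogonalProjectionOnto u : H) - w‖ ≤ δ * ‖u - (V.orthogonalProjectionOnto u : H)‖) :
    ‖u - (U.orthogonalProjectionOnto u : H)‖ ^ 2
      ≤ (1 + 2 * δ ^ 2) * ‖u - (V.orthogonalProjectionOnto u : H)‖ ^ 2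
        + 2 * ‖w - (U.orthogonalProjectionOnto w : H)‖ ^ 2 := by
  set Pu : H := (U.orthogonalProjectionOnto u : H)
  set Pv : H := (V.orthogonalProjectionOnto u : H)
  set Pw : H := (U.orthogonalProjectionOnto w : H)
  -- step 1: ‖u - Pu‖ ≤ ‖u - Pw‖
  have h1 : ‖u - Pu‖ ≤ ‖u - Pw‖ := by
    rw [show ‖u - Pu‖ = ‖u - U.starProjection u‖ from rfl, Submodule.starProjection_minimal]
    exact ciInf_le ⟨0, by rintro _ ⟨x, rfl⟩; positivity⟩
      (⟨Pw, (U.orthogonalProjectionOnto w).2⟩ : U)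
  -- step 2: Pythagoras
  have horth : (inner ℝ (u - Pv) (Pv - Pw) : ℝ) = 0 := by
    apply (Submodule.mem_orthogonal' V _).1 (Submodule.sub_starProjection_mem_orthogonal (K := V) u)
    exact Submodule.sub_mem V (V.orthogonalProjectionOnto u).2 (hUV (U.orthogonalProjectionOnto w).2)
  have h2 : ‖u - Pw‖ ^ 2 = ‖u - Pv‖ ^ 2 + ‖Pv - Pw‖ ^ 2 := by
    have := norm_add_sq_real (u - Pv) (Pv - Pw)
    simp only [horth, mul_zero, add_zero] at this
    simpa [sub_add_sub_cancel] using this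
  -- step 3: triangle + bound
  have h3 : ‖Pv - Pw‖ ≤ δ * ‖u - Pv‖ + ‖w - Pw‖ := by
    calc ‖Pv - Pw‖ = ‖(Pv - w) + (w - Pw)‖ := by rw [sub_add_sub_cancel]
    _ ≤ ‖Pv - w‖ + ‖w - Pw‖ := norm_add_le _ _
    _ ≤ _ := add_le_add_left hbound _
  have hn1 : (0:ℝ) ≤ ‖Pv - Pw‖ := norm_nonneg _
  have hn2 : (0:ℝ) ≤ ‖u - Pv‖ := norm_nonneg _
  have hn3 : (0:ℝ) ≤ ‖w - Pw‖ := norm_nonneg _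
  have hn4 : (0:ℝ) ≤ ‖u - Pw‖ := norm_nonneg _
  have h1sq : ‖u - Pu‖ ^ 2 ≤ ‖u - Pw‖ ^ 2 := pow_le_pow_left₀ (norm_nonneg _) h1 2
  have h3sq : ‖Pv - Pw‖ ^ 2 ≤ (δ * ‖u - Pv‖ + ‖w - Pw‖) ^ 2 := pow_le_pow_left₀ hn1 h3 2
  nlinarith [sq_nonneg (δ * ‖u - Pv‖ - ‖w - Pw‖)]
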